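/- Let n ≥ 2 and let M be a real orthogonal n×n matrix (M·Mᵀ = I). Write M in block form as (A b; c d), where A is the (n−1)×(n−1) upper-left block, b ∈ ℝ^{n−1} consists of the first n−1 entries of the last column, c ∈ ℝ^{n−1} consists of the first n−1 entries of the last row, and d ∈ ℝ is the (n,n) entry. Then: (a) |b| = |c| (Euclidean norms); (b) for every z ∈ ℝ^{n−1}, |(d·A − b⊗c)z| ≥ |d|·|z|, where b⊗c is the matrix with entries bᵢcⱼ; (c) d·det(d·A − b⊗c) = d^{n−1}·det M; in particular, if d ≠ 0 then the matrix d·A − b⊗c is invertible. -/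
import Mathlib


/-- Let `n ≥ 2` (here the full size is `n + 1` with `n ≥ 1`) and let `M` be a
real orthogonal matrix (`M * Mᵀ = 1`). Write `M` in block form `(A b; c d)` where `A` is the
upper-left `n × n` block, `b` the first `n` entries of the last column, `c` the first `n`
entries of the last row, and `d` the bottom-right entry. Then:
(a) `|b| = |c|` (Euclidean norms);
(b) for every `z ∈ ℝⁿ`, `|(d·A − b⊗c)z| ≥ |d|·|z|`;
(c) `d·det(d·A − b⊗c) = dⁿ·det M`; in particular, if `d ≠ 0` then `d·A − b⊗c` is invertible. -/
theorem stmt6 (n : ℕ) (hn : 1 ≤ n)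
    (M : Matrix (Fin (n + 1)) (Fin (n + 1)) ℝ) (hM : M * M.transpose = 1)
    (A : Matrix (Fin n) (Fin n) ℝ) (hA : ∀ i j, A i j = M i.castSucc j.castSucc)
    (b c : Fin n → ℝ)
    (hb : ∀ i, b i = M i.castSucc (Fin.last n))
    (hc : ∀ j, c j = M (Fin.last n) j.castSucc)
    (d : ℝ) (hd : d = M (Fin.last n) (Fin.last n)) :
    Real.sqrt (∑ i, b i ^ 2) = Real.sqrt (∑ j, c j ^ 2)
    ∧ (∀ z : Fin n → ℝ,
        |d| * Real.sqrt (∑ i, z i ^ 2)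
          ≤ Real.sqrt (∑ i, ((d • A - Matrix.vecMulVec b c).mulVec z) i ^ 2))
    ∧ d * (d • A - Matrix.vecMulVec b c).det = d ^ n * M.det
    ∧ (d ≠ 0 → IsUnit (d • A - Matrix.vecMulVec b c)) := by
  have hMt : M.transpose * M = 1 := mul_eq_one_comm.mp hM
  set N := d • A - Matrix.vecMulVec b c with hN
  -- part (a)
  have hbb : (∑ i, b i ^ 2) + d ^ 2 = 1 := by
    have h := congrFun (congrFun hMt (Fin.last n)) (Fin.last n)
    simp only [Matrix.mul_apply, Matrix.transpose_apply, Matrix.one_apply_eq,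
      Fin.sum_univ_castSucc] at h
    rw [← h]
    congr 1
    · exact Finset.sum_congr rfl fun i _ => by rw [hb, sq]
    · rw [hd, sq]
  have hcc : (∑ j, c j ^ 2) + d ^ 2 = 1 := by
    have h := congrFun (congrFun hM (Fin.last n)) (Fin.last n)
    simp only [Matrix.mul_apply, Matrix.transpose_apply, Matrix.one_apply_eq,
      Fin.sum_univ_castSucc] at h
    rw [← h]
    congr 1
    · exact Finset.sum_congr rfl fun j _ => by rw [hc, sq]
    · rw [hd, sq]
  have parta : Real.sqrt (∑ i, b i ^ 2) = Real.sqrt (∑ j, c j ^ 2) := by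
    have : (∑ i, b i ^ 2) = ∑ j, c j ^ 2 := by linarith
    rw [this]
  -- part (b)
  have partb : ∀ z : Fin n → ℝ,
      |d| * Real.sqrt (∑ i, z i ^ 2) ≤ Real.sqrt (∑ i, (N.mulVec z) i ^ 2) := by
    intro z
    set u : Fin (n + 1) → ℝ := Fin.snoc (fun i => d * z i) (-(∑ j, c j * z j)) with hu
    have hMu : M.mulVec u = Fin.snoc (N.mulVec z) 0 := by
      funext k
      induction k using Fin.lastCases with
      | last =>
        simp only [Matrix.mulVec, dotProduct, Fin.snoc_last, hu,
          Fin.sum_univ_castSucc, Fin.snoc_castSucc]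
        rw [← hd]
        have : ∀ j : Fin n, M (Fin.last n) j.castSucc * (d * z j) = d * (c j * z j) := by
          intro j; rw [← hc]; ring
        rw [Finset.sum_congr rfl fun j _ => this j, ← Finset.mul_sum]
        ring
      | cast i =>
        simp only [Matrix.mulVec, dotProduct, Fin.snoc_castSucc, hu,
          Fin.sum_univ_castSucc, Fin.snoc_last]
        have : ∀ j : Fin n, N i j * z j = M i.castSucc j.castSucc * (d * z j)
            - M i.castSucc (Fin.last n) * (c j * z j) := by
          intro j
          simp only [hN, Matrix.sub_apply, Matrix.smul_apply, Matrix.vecMulVec_apply,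
            smul_eq_mul, hA, hb]
          ring
        rw [Finset.sum_congr rfl fun j _ => this j, Finset.sum_sub_distrib, ← Finset.mul_sum]
        ring
    have hdot : ∑ k, (M.mulVec u) k ^ 2 = ∑ k, u k ^ 2 := by
      have h1 : dotProduct (M.mulVec u) (M.mulVec u) = dotProduct u u := by
        rw [Matrix.dotProduct_mulVec, ← Matrix.mulVec_transpose, Matrix.mulVec_mulVec, hMt,
          Matrix.one_mulVec]
      simpa [dotProduct, sq] using h1
    have hsum : ∑ i, (N.mulVec z) i ^ 2 = d ^ 2 * (∑ i, z i ^ 2) + (∑ j, c j * z j) ^ 2 := by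
      have h2 : ∑ k, (Fin.snoc (N.mulVec z) (0:ℝ)) k ^ 2 = ∑ k, u k ^ 2 := by
        rw [← hMu]; exact hdot
      rw [Fin.sum_univ_castSucc] at h2
      simp only [Fin.snoc_castSucc, Fin.snoc_last, hu] at h2
      rw [Fin.sum_univ_castSucc] at h2
      simp only [Fin.snoc_castSucc, Fin.snoc_last] at h2
      rw [show ∑ i, (N.mulVec z) i ^ 2 = ∑ i, (N.mulVec z) i ^ 2 + 0^2 by ring, h2,
        Finset.mul_sum]
      rw [Finset.sum_congr rfl fun i _ => show (d * z i)^2 = d^2 * z i ^2 by ring]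
      ring
    have hle : d ^ 2 * (∑ i, z i ^ 2) ≤ ∑ i, (N.mulVec z) i ^ 2 := by
      rw [hsum]; nlinarith [sq_nonneg (∑ j, c j * z j)]
    calc |d| * Real.sqrt (∑ i, z i ^ 2) = Real.sqrt (d ^ 2 * ∑ i, z i ^ 2) := by
          rw [Real.sqrt_mul (sq_nonneg d), Real.sqrt_sq_eq_abs]
      _ ≤ Real.sqrt (∑ i, (N.mulVec z) i ^ 2) := Real.sqrt_le_sqrt hle
  -- part (c)
  have hsub : M.submatrix finSumFinEquiv finSumFinEquiv =
      Matrix.fromBlocks A (Matrix.of fun i (_ : Fin 1) => b i)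
        (Matrix.of fun (_ : Fin 1) j => c j) (Matrix.of fun (_ : Fin 1) (_ : Fin 1) => d) := by
    ext i j
    have hcast : ∀ i : Fin n, (finSumFinEquiv (Sum.inl i) : Fin (n + 1)) = i.castSucc := by
      intro i; apply Fin.ext; simp
    have hlast : ∀ j : Fin 1, (finSumFinEquiv (Sum.inr j) : Fin (n + 1)) = Fin.last n := by
      intro j; apply Fin.ext; simp [Fin.last, Subsingleton.elim j 0]
    cases i with
    | inl i =>
      cases j with
      | inl j => simp [Matrix.submatrix_apply, hcast, hA]
      | inr j => simp [Matrix.submatrix_apply, hcast, hlast, hb]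
    | inr i =>
      cases j with
      | inl j => simp [Matrix.submatrix_apply, hcast, hlast, hc]
      | inr j => simp [Matrix.submatrix_apply, hlast, hd]
  have partc : d * N.det = d ^ n * M.det := by
    rcases eq_or_ne d 0 with h0 | h0
    · rw [h0, zero_mul, zero_pow (by omega : n ≠ 0), zero_mul]
    · have hD : (Matrix.of fun (_ : Fin 1) (_ : Fin 1) => d) =
          d • (1 : Matrix (Fin 1) (Fin 1) ℝ) := by
        ext i j
        simp [Matrix.one_apply, Subsingleton.elim i j]
      haveI : Invertible (Matrix.of fun (_ : Fin 1) (_ : Fin 1) => d) :=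
        ⟨d⁻¹ • (1 : Matrix (Fin 1) (Fin 1) ℝ),
         by rw [hD, smul_mul_assoc, Matrix.mul_smul, smul_smul, inv_mul_cancel₀ h0,
              Matrix.one_mul, one_smul],
         by rw [hD, smul_mul_assoc, Matrix.mul_smul, smul_smul, mul_inv_cancel₀ h0,
              Matrix.one_mul, one_smul]⟩
      have hinv : ⅟(Matrix.of fun (_ : Fin 1) (_ : Fin 1) => d) =
          d⁻¹ • (1 : Matrix (Fin 1) (Fin 1) ℝ) :=
        invOf_eq_right_inv (by
          rw [hD, smul_mul_assoc, Matrix.mul_smul, smul_smul, mul_inv_cancel₀ h0,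
            Matrix.one_mul, one_smul])
      have hdetM : M.det = d * (A - d⁻¹ • Matrix.vecMulVec b c).det := by
        rw [← Matrix.det_submatrix_equiv_self finSumFinEquiv M, hsub,
          Matrix.det_fromBlocks₂₂, hinv]
        congr 1
        · rw [Matrix.det_fin_one]; rfl
        · congr 1
          rw [Matrix.mul_smul, Matrix.mul_one, Matrix.smul_mul]
          congr 1
          ext i j
          simp [Matrix.mul_apply, Matrix.vecMulVec_apply]
      have hNfac : N = d • (A - d⁻¹ • Matrix.vecMulVec b c) := by
        rw [hN, smul_sub, smul_smul, mul_inv_cancel₀ h0, one_smul]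
      rw [hNfac, Matrix.det_smul, Fintype.card_fin, hdetM]
      ring
  refine ⟨parta, partb, partc, fun h0 => ?_⟩
  have hdetM2 : M.det * M.det = 1 := by
    have := congrArg Matrix.det hM
    rwa [Matrix.det_mul, Matrix.det_transpose, Matrix.det_one] at this
  have hMdet : M.det ≠ 0 := by
    intro h; rw [h, mul_zero] at hdetM2; exact zero_ne_one hdetM2
  have hNdet : N.det ≠ 0 := by
    intro h
    rw [h, mul_zero] at partc
    exact (mul_ne_zero (pow_ne_zero n h0) hMdet) partc.symm
  exact (Matrix.isUnit_iff_isUnit_det N).mpr (isUnit_iff_ne_zero.mpr hNdet)
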